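/- Let λ be a p-partition of r with s_i parts equal to p^i, and let φ_λ : ∏_{s_i>0} τ̄_{s_i} → τ̄_r be the map defined blockwise: writing elements of the union of the s_i blocks of size p^i as c + (a−1)p^i + b with 1 ≤ a ≤ s_i, 1 ≤ b ≤ p^i, and c = Σ_{j>i} s_j p^j, set φ_λ(∏α_i)(c + (a−1)p^i + b) = c + (α_i(a)−1)p^i + b if α_i(a) ≠ 0, and 0 if α_i(a) = 0. Then φ_λ is an injective monoid homomorphism. -/

import Mathlib

/-- `tauC p M s i = ∑_{j > i} s j · p^j` is the number of integers lying in
blocks of size larger than `p^i`. -/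
def tauC (p M : ℕ) (s : ℕ → ℕ) (i : ℕ) : ℕ :=
  ∑ j ∈ Finset.Ioc i M, s j * p ^ j

/-- The index `i` of the group of blocks of size `p^i` containing `x`. -/
def tauIdx (p M : ℕ) (s : ℕ → ℕ) (x : ℕ) : ℕ :=
  M + 1 - ((Finset.range (M + 1)).filter (fun j => tauC p M s j < x)).card

/-- The map `φ_λ`: given a tuple `α` with `α i ∈ τ̄_{s i}`, write a nonzero
`x ≤ r` as `c + (a-1)p^i + b` with `c = tauC p M s i`, `1 ≤ a ≤ s i`,
`1 ≤ b ≤ p^i`; then `φ_λ(α)(x) = c + (α i a - 1)p^i + b` if `α i a ≠ 0`,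
and `0` otherwise. -/
def phiMap (p M : ℕ) (s : ℕ → ℕ) (α : ℕ → ℕ → ℕ) (x : ℕ) : ℕ :=
  if x = 0 then 0
  else
    let i := tauIdx p M s x
    let a := (x - tauC p M s i - 1) / p ^ i + 1
    let b := (x - tauC p M s i - 1) % p ^ i + 1
    if α i a = 0 then 0 else tauC p M s i + (α i a - 1) * p ^ i + b

section Aux

variable (p M : ℕ) (s : ℕ → ℕ)

lemma tauC_anti {i j : ℕ} (h : i ≤ j) : tauC p M s j ≤ tauC p M s i :=
  Finset.sum_le_sum_of_subset (Finset.Ioc_subset_Ioc_left h)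

lemma tauC_M : tauC p M s M = 0 := by simp [tauC]

lemma tauC_step {i : ℕ} (h1 : 1 ≤ i) (h2 : i ≤ M) :
    tauC p M s (i - 1) = s i * p ^ i + tauC p M s i := by
  have hins : Finset.Ioc (i - 1) M = insert i (Finset.Ioc i M) := by
    ext j; simp only [Finset.mem_Ioc, Finset.mem_insert]; omega
  rw [tauC, hins, Finset.sum_insert (by simp), tauC]

lemma sum_split {i : ℕ} (h : i ≤ M) :
    (∑ j ∈ Finset.range (i + 1), s j * p ^ j) + tauC p M s i
      = ∑ j ∈ Finset.range (M + 1), s j * p ^ j := by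
  have hIoc : Finset.Ioc i M = Finset.Ico (i + 1) (M + 1) := by
    ext j; simp only [Finset.mem_Ioc, Finset.mem_Ico]; omega
  rw [tauC, hIoc, Finset.range_eq_Ico, Finset.range_eq_Ico]
  exact Finset.sum_Ico_consecutive (fun j => s j * p ^ j) (by omega : 0 ≤ i + 1) (by omega : i + 1 ≤ M + 1)

lemma tauIdx_eq {x i : ℕ} (hiM : i ≤ M) (h1 : tauC p M s i < x)
    (h2 : ∀ j, j < i → x ≤ tauC p M s j) : tauIdx p M s x = i := by
  have hfil : (Finset.range (M + 1)).filter (fun j => tauC p M s j < x)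
      = Finset.Icc i M := by
    ext j
    simp only [Finset.mem_filter, Finset.mem_range, Finset.mem_Icc]
    constructor
    · rintro ⟨hj, hcj⟩
      refine ⟨?_, by omega⟩
      by_contra hc
      push_neg at hc
      exact absurd hcj (not_lt.mpr (h2 j hc))
    · rintro ⟨hij, hjM⟩
      exact ⟨by omega, lt_of_le_of_lt (tauC_anti p M s hij) h1⟩
  rw [tauIdx, hfil, Nat.card_Icc]
  omega

lemma key (hp2 : 2 ≤ p) {i a b x : ℕ} (hiM : i ≤ M) (ha1 : 1 ≤ a) (has : a ≤ s i)
    (hb1 : 1 ≤ b) (hbp : b ≤ p ^ i)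
    (hx : x = tauC p M s i + (a - 1) * p ^ i + b) :
    tauIdx p M s x = i ∧ (x - tauC p M s i - 1) / p ^ i + 1 = a ∧
      (x - tauC p M s i - 1) % p ^ i + 1 = b := by
  have hppos : 0 < p ^ i := pow_pos (by omega) i
  have hxle : x ≤ tauC p M s i + s i * p ^ i := by
    have e : (a - 1) * p ^ i + p ^ i = ((a - 1) + 1) * p ^ i := by ring
    have e2 : (a - 1) + 1 = a := by omega
    rw [e2] at e
    have h2 : a * p ^ i ≤ s i * p ^ i := Nat.mul_le_mul_right _ has
    omega
  have hidx : tauIdx p M s x = i := by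
    apply tauIdx_eq p M s hiM (by omega)
    intro j hj
    have hi1 : 1 ≤ i := by omega
    have hstep := tauC_step p M s hi1 hiM
    have hanti := tauC_anti p M s (show j ≤ i - 1 by omega)
    omega
  have hd : x - tauC p M s i - 1 = p ^ i * (a - 1) + (b - 1) := by
    have hA : (a - 1) * p ^ i = p ^ i * (a - 1) := Nat.mul_comm _ _
    omega
  refine ⟨hidx, ?_, ?_⟩
  · rw [hd, Nat.mul_add_div hppos, Nat.div_eq_of_lt (by omega)]
    omega
  · rw [hd, Nat.mul_add_mod, Nat.mod_eq_of_lt (by omega)]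
    omega

lemma bound (hp2 : 2 ≤ p) {r : ℕ}
    (hr : r = ∑ j ∈ Finset.range (M + 1), s j * p ^ j)
    {i a b : ℕ} (hiM : i ≤ M) (ha1 : 1 ≤ a) (has : a ≤ s i)
    (hb1 : 1 ≤ b) (hbp : b ≤ p ^ i) :
    tauC p M s i + (a - 1) * p ^ i + b ≤ r := by
  have hsplit := sum_split p M s hiM
  have hmem : s i * p ^ i ≤ ∑ j ∈ Finset.range (i + 1), s j * p ^ j :=
    Finset.single_le_sum (f := fun j => s j * p ^ j) (fun j _ => Nat.zero_le _)
      (Finset.self_mem_range_succ i)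
  have e : (a - 1) * p ^ i + p ^ i = ((a - 1) + 1) * p ^ i := by ring
  have e2 : (a - 1) + 1 = a := by omega
  rw [e2] at e
  have h2 : a * p ^ i ≤ s i * p ^ i := Nat.mul_le_mul_right _ has
  omega

lemma spec (hp2 : 2 ≤ p) {r x : ℕ}
    (hr : r = ∑ j ∈ Finset.range (M + 1), s j * p ^ j)
    (hx1 : x ≠ 0) (hxr : x ≤ r) :
    ∃ i a b, i ≤ M ∧ 1 ≤ a ∧ a ≤ s i ∧ 1 ≤ b ∧ b ≤ p ^ i ∧
      x = tauC p M s i + (a - 1) * p ^ i + b := by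
  have hex : ∃ j, tauC p M s j < x := ⟨M, by rw [tauC_M]; omega⟩
  set i := Nat.find hex with hi
  have hci : tauC p M s i < x := Nat.find_spec hex
  have hiM : i ≤ M := Nat.find_min' hex (by rw [tauC_M]; omega)
  have hub : x ≤ tauC p M s i + s i * p ^ i := by
    rcases Nat.eq_zero_or_pos i with h0 | h1
    · have hsplit := sum_split p M s (Nat.zero_le M)
      rw [Finset.sum_range_one] at hsplit
      rw [h0]
      omega
    · have hmin := Nat.find_min hex (show i - 1 < i by omega)
      push_neg at hmin
      have hstep := tauC_step p M s h1 hiM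
      omega
  have hppos : 0 < p ^ i := pow_pos (by omega) i
  set d := x - tauC p M s i - 1 with hd
  have hds : d < s i * p ^ i := by omega
  refine ⟨i, d / p ^ i + 1, d % p ^ i + 1, hiM, Nat.le_add_left 1 _, ?_, Nat.le_add_left 1 _, ?_, ?_⟩
  · have : d / p ^ i < s i := (Nat.div_lt_iff_lt_mul hppos).mpr hds
    omega
  · have := Nat.mod_lt d hppos
    omega
  · have hdm := Nat.div_add_mod d (p ^ i)
    have h1 : (d / p ^ i + 1 - 1) * p ^ i = p ^ i * (d / p ^ i) := by
      simp [Nat.mul_comm]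
    omega

lemma phiMap_eq (α : ℕ → ℕ → ℕ) {x : ℕ} (hx : x ≠ 0) :
    phiMap p M s α x =
      if α (tauIdx p M s x)
          ((x - tauC p M s (tauIdx p M s x) - 1) / p ^ (tauIdx p M s x) + 1) = 0
      then 0
      else tauC p M s (tauIdx p M s x) +
        (α (tauIdx p M s x)
          ((x - tauC p M s (tauIdx p M s x) - 1) / p ^ (tauIdx p M s x) + 1) - 1)
          * p ^ (tauIdx p M s x) +
        ((x - tauC p M s (tauIdx p M s x) - 1) % p ^ (tauIdx p M s x) + 1) := by
  rw [phiMap, if_neg hx]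

end Aux

/-- `φ_λ` is an injective monoid homomorphism
`∏_{s_i > 0} τ̄_{s_i} → τ̄_r`: it lands in `τ̄_r`, sends the identity tuple to
the identity, sends (componentwise) composition to composition, and is
injective on tuples of maps in `τ̄_{s_i}`. -/
theorem stmt_14 (p M : ℕ) (hp : p.Prime) (s : ℕ → ℕ)
    (r : ℕ) (hr : r = ∑ j ∈ Finset.range (M + 1), s j * p ^ j)
    (α β : ℕ → ℕ → ℕ)
    (hα : ∀ i, i ≤ M → α i 0 = 0 ∧ ∀ a, a ≤ s i → α i a ≤ s i)
    (hβ : ∀ i, i ≤ M → β i 0 = 0 ∧ ∀ a, a ≤ s i → β i a ≤ s i) :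
    (phiMap p M s α 0 = 0 ∧ ∀ x, x ≤ r → phiMap p M s α x ≤ r) ∧
    (∀ x, x ≤ r →
      phiMap p M s (fun i a => α i (β i a)) x = phiMap p M s α (phiMap p M s β x)) ∧
    (∀ x, x ≤ r → phiMap p M s (fun _ a => a) x = x) ∧
    ((∀ x, x ≤ r → phiMap p M s α x = phiMap p M s β x) →
      ∀ i, i ≤ M → ∀ a, a ≤ s i → α i a = β i a) := by
  have hp2 : 2 ≤ p := hp.two_le
  refine ⟨⟨by simp [phiMap], ?_⟩, ?_, ?_, ?_⟩
  · -- lands in τ̄_r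
    intro x hx
    by_cases hx0 : x = 0
    · simp [phiMap, hx0]
    · obtain ⟨i, a, b, hiM, ha1, has, hb1, hbp, hxeq⟩ := spec p M s hp2 hr hx0 hx
      obtain ⟨hidx, hdiv, hmod⟩ := key p M s hp2 hiM ha1 has hb1 hbp hxeq
      rw [phiMap_eq p M s α hx0]
      simp only [hidx, hdiv, hmod]
      by_cases hA : α i a = 0
      · rw [if_pos hA]; exact Nat.zero_le r
      · rw [if_neg hA]
        exact bound p M s hp2 hr hiM (by omega) ((hα i hiM).2 a has) hb1 hbp
  · -- composition
    intro x hx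
    by_cases hx0 : x = 0
    · subst hx0; simp [phiMap]
    · obtain ⟨i, a, b, hiM, ha1, has, hb1, hbp, hxeq⟩ := spec p M s hp2 hr hx0 hx
      obtain ⟨hidx, hdiv, hmod⟩ := key p M s hp2 hiM ha1 has hb1 hbp hxeq
      rw [phiMap_eq p M s _ hx0, phiMap_eq p M s β hx0]
      simp only [hidx, hdiv, hmod]
      by_cases hB : β i a = 0
      · have hA0 : α i (β i a) = 0 := by rw [hB]; exact (hα i hiM).1
        rw [if_pos hA0, if_pos hB]
        simp [phiMap]
      · rw [if_neg hB]
        have ha'1 : 1 ≤ β i a := by omega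
        have ha's : β i a ≤ s i := (hβ i hiM).2 a has
        have hy0 : tauC p M s i + (β i a - 1) * p ^ i + b ≠ 0 := by omega
        obtain ⟨hidx2, hdiv2, hmod2⟩ := key p M s hp2 hiM ha'1 ha's hb1 hbp rfl
        rw [phiMap_eq p M s α hy0]
        simp only [hidx2, hdiv2, hmod2]
  · -- identity
    intro x hx
    by_cases hx0 : x = 0
    · simp [phiMap, hx0]
    · obtain ⟨i, a, b, hiM, ha1, has, hb1, hbp, hxeq⟩ := spec p M s hp2 hr hx0 hx
      obtain ⟨hidx, hdiv, hmod⟩ := key p M s hp2 hiM ha1 has hb1 hbp hxeq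
      rw [phiMap_eq p M s _ hx0]
      simp only [hidx, hdiv, hmod]
      rw [if_neg (by omega : ¬ a = 0)]
      omega
  · -- injectivity
    intro h i hiM a has
    rcases Nat.eq_zero_or_pos a with rfl | ha1
    · rw [(hα i hiM).1, (hβ i hiM).1]
    · have hppos : 0 < p ^ i := pow_pos (by omega) i
      have hb1 : (1:ℕ) ≤ p ^ i := hppos
      obtain ⟨hidx, hdiv, hmod⟩ := key p M s hp2 hiM ha1 has le_rfl hb1 rfl
      have hx0 : tauC p M s i + (a - 1) * p ^ i + 1 ≠ 0 := by omega
      have hxr : tauC p M s i + (a - 1) * p ^ i + 1 ≤ r :=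
        bound p M s hp2 hr hiM ha1 has le_rfl hb1
      have heq := h _ hxr
      rw [phiMap_eq p M s α hx0, phiMap_eq p M s β hx0] at heq
      simp only [hidx, hdiv, hmod] at heq
      by_cases hA : α i a = 0 <;> by_cases hB : β i a = 0
      · rw [hA, hB]
      · rw [if_pos hA, if_neg hB] at heq; omega
      · rw [if_neg hA, if_pos hB] at heq; omega
      · rw [if_neg hA, if_neg hB] at heq
        have h1 : (α i a - 1) * p ^ i = (β i a - 1) * p ^ i := by omega
        have h2 := Nat.eq_of_mul_eq_mul_right hppos h1
        omega
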